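/- Let n be a squarefree positive integer. Then for every k ≥ 0, (μ ⋆ Λ^{⋆k})(n) = (-1)^k μ(n) ∑_{p_1 ⋯ p_k | n} log p_1 ⋯ log p_k, where the sum runs over ordered k-tuples of distinct primes p_1, …, p_k whose product divides n. -/

import Mathlib

open ArithmeticFunction Finset

open scoped Classical

lemma inj_sum_succ (g : ℕ → ℝ) (k : ℕ) (s : Finset ℕ) :
    ∑ f ∈ (Fintype.piFinset fun _ : Fin (k+1) => s).filter Function.Injective, ∏ i, g (f i)
    = ∑ a ∈ s, g a * ∑ f ∈ (Fintype.piFinset fun _ : Fin k => s.erase a).filter Function.Injective,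
        ∏ i, g (f i) := by
  simp only [Finset.mul_sum]
  rw [Finset.sum_sigma']
  refine Finset.sum_nbij' (fun F : Fin (k+1) → ℕ => (⟨F 0, F ∘ Fin.succ⟩ : (_ : ℕ) × (Fin k → ℕ))) (fun P : (_ : ℕ) × (Fin k → ℕ) => Fin.cons P.1 P.2) ?_ ?_ ?_ ?_ ?_
  · rintro F hF
    simp only [Finset.mem_filter, Fintype.mem_piFinset] at hF
    obtain ⟨hmem, hinj⟩ := hF
    simp only [Finset.mem_sigma, Finset.mem_filter, Fintype.mem_piFinset, Function.comp]
    refine ⟨hmem 0, fun i => Finset.mem_erase.2 ⟨fun h => ?_, hmem _⟩, fun i j h => ?_⟩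
    · exact Fin.succ_ne_zero i (hinj h)
    · exact Fin.succ_injective _ (hinj h)
  · rintro ⟨a, f⟩ hP
    simp only [Finset.mem_sigma, Finset.mem_filter, Fintype.mem_piFinset] at hP
    obtain ⟨ha, hf, hinj⟩ := hP
    simp only [Finset.mem_filter, Fintype.mem_piFinset]
    constructor
    · intro i
      refine Fin.cases ?_ ?_ i
      · simpa using ha
      · intro j; simpa using Finset.mem_of_mem_erase (hf j)
    · refine Fin.cons_injective_iff.2 ⟨?_, hinj⟩
      rintro ⟨i, rfl⟩
      exact Finset.notMem_erase (f i) s (by simpa using hf i)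
  · intro F hF
    exact Fin.cons_self_tail F
  · rintro ⟨a, f⟩ hP
    simp [Fin.cons_zero, Fin.cons_succ]
  · intro F hF
    simp [Fin.prod_univ_succ]

lemma primeFactors_div_prime {n p : ℕ} (hn : Squarefree n) (hp : p.Prime) (hpn : p ∣ n) :
    (n / p).primeFactors = n.primeFactors.erase p := by
  have hn0 : n ≠ 0 := hn.ne_zero
  have hnp : p ∉ (n / p).primeFactors := by
    intro h
    have : p ∣ n / p := (Nat.mem_primeFactors.1 h).2.1
    have : p * p ∣ n := by
      have := mul_dvd_mul_left p this
      rwa [Nat.mul_div_cancel' hpn] at this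
    exact hp.not_isUnit (hn p this)
  have hmul : n = p * (n / p) := (Nat.mul_div_cancel' hpn).symm
  have hq0 : n / p ≠ 0 := fun h => hn0 (by rw [hmul, h, mul_zero])
  have h2 : n.primeFactors = insert p ((n / p).primeFactors) := by
    conv_lhs => rw [hmul]
    rw [Nat.primeFactors_mul hp.ne_zero hq0, hp.primeFactors]
    ext q; simp [or_comm]
  rw [h2, Finset.erase_insert hnp]

lemma main_aux (k : ℕ) : ∀ n : ℕ, Squarefree n →
    ((↑(ArithmeticFunction.moebius) : ArithmeticFunction ℝ) * ArithmeticFunction.vonMangoldt ^ k) n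
      = (-1 : ℝ) ^ k * (ArithmeticFunction.moebius n : ℝ) *
        ∑ f ∈ (Fintype.piFinset fun _ : Fin k => n.primeFactors).filter Function.Injective,
          ∏ i, Real.log (f i) := by
  induction k with
  | zero =>
    intro n hn
    simp
    rw [Finset.filter_true_of_mem fun f _ => Function.injective_of_subsingleton f]
    simp
  | succ k ih =>
    intro n hn
    have hn0 : n ≠ 0 := hn.ne_zero
    rw [pow_succ, ← mul_assoc, ArithmeticFunction.mul_apply]
    rw [Nat.sum_divisorsAntidiagonal' (f := fun a b =>
      ((↑(ArithmeticFunction.moebius) : ArithmeticFunction ℝ) * ArithmeticFunction.vonMangoldt ^ k) a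
        * ArithmeticFunction.vonMangoldt b)]
    have hfil : n.divisors.filter Nat.Prime = n.primeFactors := by
      ext p; simp [Nat.mem_primeFactors, Nat.mem_divisors, and_comm, hn0]
    rw [← Finset.sum_filter_of_ne (p := Nat.Prime) (fun d hd hne0 => by
      have hΛ : ArithmeticFunction.vonMangoldt d ≠ 0 := right_ne_zero_of_mul hne0
      have hpp : IsPrimePow d := ArithmeticFunction.vonMangoldt_ne_zero_iff.1 hΛ
      exact Nat.squarefree_and_prime_pow_iff_prime.1
        ⟨hn.squarefree_of_dvd (Nat.dvd_of_mem_divisors hd), hpp⟩), hfil]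
    rw [inj_sum_succ (fun m => Real.log m) k n.primeFactors, Finset.mul_sum]
    refine Finset.sum_congr rfl fun p hp => ?_
    obtain ⟨hp', hpdvd, -⟩ := Nat.mem_primeFactors.1 hp
    have hsq : Squarefree (n / p) := hn.squarefree_of_dvd (Nat.div_dvd_of_dvd hpdvd)
    rw [ih (n / p) hsq, primeFactors_div_prime hn hp' hpdvd,
      ArithmeticFunction.vonMangoldt_apply_prime hp']
    have hcop : Nat.Coprime p (n / p) := by
      refine (hp'.coprime_iff_not_dvd).2 fun h => hp'.not_isUnit (hn p ?_)
      have := mul_dvd_mul_left p h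
      rwa [Nat.mul_div_cancel' hpdvd] at this
    have hmu : (ArithmeticFunction.moebius (n / p) : ℝ) = -(ArithmeticFunction.moebius n : ℝ) := by
      have hmul : n = p * (n / p) := (Nat.mul_div_cancel' hpdvd).symm
      have := ArithmeticFunction.isMultiplicative_moebius.map_mul_of_coprime hcop
      rw [← hmul, ArithmeticFunction.moebius_apply_prime hp'] at this
      rw [this]; push_cast; ring
    rw [hmu]
    ring


lemma sum_conv (n : ℕ) (hn : Squarefree n) (k : ℕ) :
    ∑ p ∈ Finset.univ.filter
        (fun p : Fin k → n.divisors =>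
          (∀ i, ((p i : ℕ)).Prime) ∧ Function.Injective p ∧
            (∏ i, (p i : ℕ)) ∣ n),
      ∏ i, Real.log (p i : ℕ)
    = ∑ f ∈ (Fintype.piFinset fun _ : Fin k => n.primeFactors).filter Function.Injective,
        ∏ i, Real.log (f i) := by
  refine Finset.sum_bij' (fun p _ => fun i => ((p i : ℕ)))
    (fun f hf => fun i => (⟨f i, Nat.mem_divisors.2
      ⟨(Nat.mem_primeFactors.1 (Fintype.mem_piFinset.1 (Finset.mem_filter.1 hf).1 i)).2.1,
        hn.ne_zero⟩⟩ : n.divisors)) ?_ ?_ ?_ ?_ ?_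
  · intro p hp
    obtain ⟨-, hprime, hinj, -⟩ := Finset.mem_filter.1 hp
    refine Finset.mem_filter.2 ⟨Fintype.mem_piFinset.2 fun i => Nat.mem_primeFactors.2
      ⟨hprime i, Nat.dvd_of_mem_divisors (p i).2, hn.ne_zero⟩, fun i j h => ?_⟩
    exact hinj (Subtype.ext h)
  · intro f hf
    obtain ⟨hmem, hinj⟩ := Finset.mem_filter.1 hf
    have hprime : ∀ i, (f i).Prime := fun i =>
      (Nat.mem_primeFactors.1 (Fintype.mem_piFinset.1 hmem i)).1
    refine Finset.mem_filter.2 ⟨Finset.mem_univ _, fun i => hprime i, fun i j h => ?_, ?_⟩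
    · exact hinj (congrArg Subtype.val h)
    · have himg : ∏ q ∈ Finset.univ.image f, (q : ℕ) = ∏ i, (f i) :=
        Finset.prod_image (f := fun q : ℕ => q) fun i _ j _ h => hinj h
      rw [← himg]
      refine Finset.prod_primes_dvd n (fun q hq => ?_) (fun q hq => ?_)
      · obtain ⟨i, -, rfl⟩ := Finset.mem_image.1 hq
        exact (hprime i).prime
      · obtain ⟨i, -, rfl⟩ := Finset.mem_image.1 hq
        exact Nat.dvd_of_mem_divisors (Nat.mem_divisors.2
          ⟨(Nat.mem_primeFactors.1 (Fintype.mem_piFinset.1 hmem i)).2.1, hn.ne_zero⟩)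
  · intro p hp; funext i; exact Subtype.ext rfl
  · intro f hf; funext i; rfl
  · intro p hp; rfl


open scoped Classical in
/-- For `n` squarefree and `k ≥ 0`,
`(μ ⋆ Λ^{⋆k})(n) = (-1)^k μ(n) ∑_{p_1 ⋯ p_k ∣ n} log p_1 ⋯ log p_k`,
the sum running over ordered `k`-tuples of distinct primes whose product
divides `n`. -/
theorem moebius_mul_vonMangoldt_pow_of_squarefree (n : ℕ) (hn : Squarefree n) (k : ℕ) :
    ((↑(ArithmeticFunction.moebius) : ArithmeticFunction ℝ) *
        ArithmeticFunction.vonMangoldt ^ k) n =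
      (-1 : ℝ) ^ k * (ArithmeticFunction.moebius n : ℝ) *
        ∑ p ∈ Finset.univ.filter
            (fun p : Fin k → n.divisors =>
              (∀ i, ((p i : ℕ)).Prime) ∧ Function.Injective p ∧
                (∏ i, (p i : ℕ)) ∣ n),
          ∏ i, Real.log (p i : ℕ) := by
  rw [main_aux k n hn]
  congr 1
  exact (sum_conv n hn k).symm
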